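/- Let p ∈ (0,1/2) and define F(δ) = δ²/(2(1-2p)) · (1 + √(1 - 4(1-p)/δ))³ / ((δ-2) + δ√(1 - 4(1-p)/δ)) - 1 for δ ≥ 4(1-p). (i) If p < 1/4, then F is strictly monotone increasing on [4(1-p), ∞). (ii) If 1/4 ≤ p < 1/2, then F is strictly decreasing on [4(1-p), 1 + 1/√p] and strictly increasing on [1 + 1/√p, ∞). -/

import Mathlib

private lemma Feq18 (p δ : ℝ) (hp0 : 0 < p) (hp2 : p < 1/2) (hδ : 4*(1-p) ≤ δ) :
    δ ^ 2 / (2 * (1 - 2 * p)) * (1 + Real.sqrt (1 - 4 * (1 - p) / δ)) ^ 3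
        / ((δ - 2) + δ * Real.sqrt (1 - 4 * (1 - p) / δ)) - 1
    = (2-2*p)^2*(1+Real.sqrt (1 - 4 * (1 - p) / δ))
        /((1-2*p)*(1-Real.sqrt (1 - 4 * (1 - p) / δ))*((1-2*p)+Real.sqrt (1 - 4 * (1 - p) / δ))) - 1 := by
  set s := Real.sqrt (1 - 4 * (1 - p) / δ) with hs
  have hδ2 : 2 < δ := lt_of_lt_of_le (by linarith) hδ
  have hδ0 : 0 < δ := by linarith
  have hs0 : 0 ≤ s := Real.sqrt_nonneg _
  have harg : 0 ≤ 1 - 4 * (1 - p) / δ := by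
    rw [sub_nonneg]; exact (div_le_one hδ0).mpr hδ
  have hs2 : s ^ 2 = 1 - 4 * (1 - p) / δ := Real.sq_sqrt harg
  have hrel : δ * s ^ 2 = δ - 4 * (1 - p) := by
    rw [hs2]; field_simp
  have hs1 : s < 1 := by
    have hpos : 0 < 4 * (1 - p) / δ := div_pos (by linarith) hδ0
    nlinarith
  have ha : 0 < 1 - 2*p := by linarith
  have hds : 0 ≤ δ * s := mul_nonneg hδ0.le hs0
  have hd1 : 0 < (δ - 2) + δ * s := by linarith
  have hd2 : 0 < (1-2*p)*(1-s)*((1-2*p)+s) :=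
    mul_pos (mul_pos ha (by linarith)) (by linarith)
  rw [sub_left_inj, div_eq_div_iff hd1.ne' hd2.ne']
  field_simp
  linear_combination (4*(1-p) - δ*(1+s)*(1-2*p+s)) * hrel

/-- basic facts about `s(δ) = √(1-4(1-p)/δ)` on the domain. -/
private lemma sfacts18 (p δ : ℝ) (hp2 : p < 1/2) (hδ : 4*(1-p) ≤ δ) :
    0 ≤ Real.sqrt (1 - 4 * (1 - p) / δ) ∧ Real.sqrt (1 - 4 * (1 - p) / δ) < 1 ∧
    Real.sqrt (1 - 4 * (1 - p) / δ) ^ 2 = 1 - 4 * (1 - p) / δ := by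
  have hδ0 : 0 < δ := lt_of_lt_of_le (by linarith) hδ
  have harg : 0 ≤ 1 - 4 * (1 - p) / δ := by
    rw [sub_nonneg]; exact (div_le_one hδ0).mpr hδ
  have hs2 := Real.sq_sqrt harg
  have hs0 := Real.sqrt_nonneg (1 - 4 * (1 - p) / δ)
  have hpos : 0 < 4 * (1 - p) / δ := div_pos (by linarith) hδ0
  exact ⟨hs0, by nlinarith, hs2⟩

private lemma smono18 (p δ₁ δ₂ : ℝ) (hp2 : p < 1/2) (h1 : 4*(1-p) ≤ δ₁) (hlt : δ₁ < δ₂) :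
    Real.sqrt (1 - 4 * (1 - p) / δ₁) < Real.sqrt (1 - 4 * (1 - p) / δ₂) := by
  have hδ0 : 0 < δ₁ := lt_of_lt_of_le (by linarith) h1
  have harg : 0 ≤ 1 - 4 * (1 - p) / δ₁ := by
    rw [sub_nonneg]; exact (div_le_one hδ0).mpr h1
  apply Real.sqrt_lt_sqrt harg
  have : 4*(1-p) / δ₂ < 4*(1-p) / δ₁ :=
    div_lt_div_of_pos_left (by linarith) hδ0 hlt
  linarith

/-- the core comparison: F δ₁ < F δ₂ whenever s₁+s₂+s₁s₂ > 4p-1. -/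
private lemma Fcomp18 (p δ₁ δ₂ : ℝ) (hp0 : 0 < p) (hp2 : p < 1/2)
    (h1 : 4*(1-p) ≤ δ₁) (h2 : 4*(1-p) ≤ δ₂)
    (hkey : 4*p - 1 < Real.sqrt (1 - 4 * (1 - p) / δ₁) + Real.sqrt (1 - 4 * (1 - p) / δ₂)
      + Real.sqrt (1 - 4 * (1 - p) / δ₁) * Real.sqrt (1 - 4 * (1 - p) / δ₂))
    (hslt : Real.sqrt (1 - 4 * (1 - p) / δ₁) < Real.sqrt (1 - 4 * (1 - p) / δ₂)) :
    δ₁ ^ 2 / (2 * (1 - 2 * p)) * (1 + Real.sqrt (1 - 4 * (1 - p) / δ₁)) ^ 3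
        / ((δ₁ - 2) + δ₁ * Real.sqrt (1 - 4 * (1 - p) / δ₁)) - 1
    < δ₂ ^ 2 / (2 * (1 - 2 * p)) * (1 + Real.sqrt (1 - 4 * (1 - p) / δ₂)) ^ 3
        / ((δ₂ - 2) + δ₂ * Real.sqrt (1 - 4 * (1 - p) / δ₂)) - 1 := by
  rw [Feq18 p δ₁ hp0 hp2 h1, Feq18 p δ₂ hp0 hp2 h2]
  obtain ⟨hs10, hs11, -⟩ := sfacts18 p δ₁ hp2 h1
  obtain ⟨hs20, hs21, -⟩ := sfacts18 p δ₂ hp2 h2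
  set s₁ := Real.sqrt (1 - 4 * (1 - p) / δ₁)
  set s₂ := Real.sqrt (1 - 4 * (1 - p) / δ₂)
  have ha : 0 < 1 - 2*p := by linarith
  have hd1 : 0 < (1-2*p)*(1-s₁)*((1-2*p)+s₁) :=
    mul_pos (mul_pos ha (by linarith)) (by linarith)
  have hd2 : 0 < (1-2*p)*(1-s₂)*((1-2*p)+s₂) :=
    mul_pos (mul_pos ha (by linarith)) (by linarith)
  rw [sub_lt_sub_iff_right, div_lt_div_iff₀ hd1 hd2]
  have h2p : (0:ℝ) < (2-2*p)^2 := by nlinarith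
  nlinarith [mul_pos (mul_pos (mul_pos h2p ha) (sub_pos.2 hslt)) (sub_pos.2 hkey)]

private lemma Fcomp18anti (p δ₁ δ₂ : ℝ) (hp0 : 0 < p) (hp2 : p < 1/2)
    (h1 : 4*(1-p) ≤ δ₁) (h2 : 4*(1-p) ≤ δ₂)
    (hkey : Real.sqrt (1 - 4 * (1 - p) / δ₁) + Real.sqrt (1 - 4 * (1 - p) / δ₂)
      + Real.sqrt (1 - 4 * (1 - p) / δ₁) * Real.sqrt (1 - 4 * (1 - p) / δ₂) < 4*p - 1)
    (hslt : Real.sqrt (1 - 4 * (1 - p) / δ₁) < Real.sqrt (1 - 4 * (1 - p) / δ₂)) :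
    δ₂ ^ 2 / (2 * (1 - 2 * p)) * (1 + Real.sqrt (1 - 4 * (1 - p) / δ₂)) ^ 3
        / ((δ₂ - 2) + δ₂ * Real.sqrt (1 - 4 * (1 - p) / δ₂)) - 1
    < δ₁ ^ 2 / (2 * (1 - 2 * p)) * (1 + Real.sqrt (1 - 4 * (1 - p) / δ₁)) ^ 3
        / ((δ₁ - 2) + δ₁ * Real.sqrt (1 - 4 * (1 - p) / δ₁)) - 1 := by
  rw [Feq18 p δ₁ hp0 hp2 h1, Feq18 p δ₂ hp0 hp2 h2]
  obtain ⟨hs10, hs11, -⟩ := sfacts18 p δ₁ hp2 h1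
  obtain ⟨hs20, hs21, -⟩ := sfacts18 p δ₂ hp2 h2
  set s₁ := Real.sqrt (1 - 4 * (1 - p) / δ₁)
  set s₂ := Real.sqrt (1 - 4 * (1 - p) / δ₂)
  have ha : 0 < 1 - 2*p := by linarith
  have hd1 : 0 < (1-2*p)*(1-s₁)*((1-2*p)+s₁) :=
    mul_pos (mul_pos ha (by linarith)) (by linarith)
  have hd2 : 0 < (1-2*p)*(1-s₂)*((1-2*p)+s₂) :=
    mul_pos (mul_pos ha (by linarith)) (by linarith)
  rw [sub_lt_sub_iff_right, div_lt_div_iff₀ hd2 hd1]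
  have h2p : (0:ℝ) < (2-2*p)^2 := by nlinarith
  nlinarith [mul_pos (mul_pos (mul_pos h2p ha) (sub_pos.2 hslt)) (sub_pos.2 hkey)]

/-- bound: δ ≤ 1 + 1/√p ⇒ s(δ) ≤ 2√p - 1 (for 1/4 ≤ p). -/
private lemma s_le18 (p δ : ℝ) (hp4 : 1/4 ≤ p) (hp2 : p < 1/2)
    (hδ1 : 4*(1-p) ≤ δ) (hδ2 : δ ≤ 1 + 1/Real.sqrt p) :
    Real.sqrt (1 - 4 * (1 - p) / δ) ≤ 2*Real.sqrt p - 1 := by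
  have hq0 : 0 < Real.sqrt p := Real.sqrt_pos.2 (by linarith)
  have hq2 : Real.sqrt p ^ 2 = p := Real.sq_sqrt (by linarith)
  have hq1 : Real.sqrt p < 1 := by nlinarith
  have hr0 : 0 ≤ 2*Real.sqrt p - 1 := by nlinarith
  have hδ0 : 0 < δ := lt_of_lt_of_le (by linarith) hδ1
  obtain ⟨hs0, -, hs2⟩ := sfacts18 p δ hp2 hδ1
  -- c/δ ≥ 4√p(1-√p)
  have hcd : 4*Real.sqrt p*(1-Real.sqrt p) ≤ 4*(1-p)/δ := by
    rw [le_div_iff₀ hδ0]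
    have h2 : δ * Real.sqrt p ≤ Real.sqrt p + 1 := by
      calc δ * Real.sqrt p ≤ (1 + 1/Real.sqrt p) * Real.sqrt p :=
            mul_le_mul_of_nonneg_right hδ2 hq0.le
        _ = Real.sqrt p + 1 := by field_simp
    nlinarith
  have hsq : Real.sqrt (1 - 4 * (1 - p) / δ) ^ 2 ≤ (2*Real.sqrt p - 1)^2 := by
    rw [hs2]; nlinarith
  nlinarith

/-- bound: 1 + 1/√p ≤ δ ⇒ 2√p - 1 ≤ s(δ) (for 1/4 ≤ p). -/
private lemma s_ge18 (p δ : ℝ) (hp4 : 1/4 ≤ p) (hp2 : p < 1/2)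
    (hδ1 : 4*(1-p) ≤ δ) (hδ2 : 1 + 1/Real.sqrt p ≤ δ) :
    2*Real.sqrt p - 1 ≤ Real.sqrt (1 - 4 * (1 - p) / δ) := by
  have hq0 : 0 < Real.sqrt p := Real.sqrt_pos.2 (by linarith)
  have hq2 : Real.sqrt p ^ 2 = p := Real.sq_sqrt (by linarith)
  have hq1 : Real.sqrt p < 1 := by nlinarith
  have hδ0 : 0 < δ := lt_of_lt_of_le (by linarith) hδ1
  obtain ⟨hs0, -, hs2⟩ := sfacts18 p δ hp2 hδ1
  have hcd : 4*(1-p)/δ ≤ 4*Real.sqrt p*(1-Real.sqrt p) := by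
    rw [div_le_iff₀ hδ0]
    have h2 : Real.sqrt p + 1 ≤ δ * Real.sqrt p := by
      calc Real.sqrt p + 1 = (1 + 1/Real.sqrt p) * Real.sqrt p := by field_simp
        _ ≤ δ * Real.sqrt p := mul_le_mul_of_nonneg_right hδ2 hq0.le
    nlinarith
  have hsq : (2*Real.sqrt p - 1)^2 ≤ Real.sqrt (1 - 4 * (1 - p) / δ) ^ 2 := by
    rw [hs2]; nlinarith
  nlinarith

/-- the critical point lies in the domain. -/
private lemma crit_mem18 (p : ℝ) (hp4 : 1/4 ≤ p) (hp2 : p < 1/2) :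
    4*(1-p) ≤ 1 + 1/Real.sqrt p := by
  have hq0 : 0 < Real.sqrt p := Real.sqrt_pos.2 (by linarith)
  have hq2 : Real.sqrt p ^ 2 = p := Real.sq_sqrt (by linarith)
  rw [← sub_nonneg]
  have key : 0 ≤ (1 + 1/Real.sqrt p - 4*(1-p)) * Real.sqrt p := by
    have : (1 + 1/Real.sqrt p - 4*(1-p)) * Real.sqrt p
        = Real.sqrt p + 1 - 4*(1-p)*Real.sqrt p := by field_simp
    rw [this]
    nlinarith [sq_nonneg (2*Real.sqrt p - 1), mul_nonneg (sq_nonneg (2*Real.sqrt p - 1)) hq0.le]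
  nlinarith

theorem stmt_18 (p : ℝ) (hp : p ∈ Set.Ioo (0:ℝ) (1/2)) :
    let F : ℝ → ℝ := fun δ =>
      δ ^ 2 / (2 * (1 - 2 * p)) * (1 + Real.sqrt (1 - 4 * (1 - p) / δ)) ^ 3
        / ((δ - 2) + δ * Real.sqrt (1 - 4 * (1 - p) / δ)) - 1
    (p < 1 / 4 → StrictMonoOn F (Set.Ici (4 * (1 - p)))) ∧
    (1 / 4 ≤ p →
      StrictAntiOn F (Set.Icc (4 * (1 - p)) (1 + 1 / Real.sqrt p)) ∧
      StrictMonoOn F (Set.Ici (1 + 1 / Real.sqrt p))) := by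
  obtain ⟨hp0, hp2⟩ := hp
  intro F
  constructor
  · intro hp4 x hx y hy hxy
    have hx' : 4*(1-p) ≤ x := hx
    have hy' : 4*(1-p) ≤ y := hy
    obtain ⟨hsx0, -, -⟩ := sfacts18 p x hp2 hx'
    obtain ⟨hsy0, -, -⟩ := sfacts18 p y hp2 hy'
    exact Fcomp18 p x y hp0 hp2 hx' hy'
      (by nlinarith [mul_nonneg hsx0 hsy0]) (smono18 p x y hp2 hx' hxy)
  · intro hp4
    have hq0 : 0 < Real.sqrt p := Real.sqrt_pos.2 (by linarith)
    have hq2 : Real.sqrt p ^ 2 = p := Real.sq_sqrt (by linarith)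
    constructor
    · intro x hx y hy hxy
      have hx1 : 4*(1-p) ≤ x := hx.1
      have hy1 : 4*(1-p) ≤ y := hy.1
      have hslt := smono18 p x y hp2 hx1 hxy
      have hsyr := s_le18 p y hp4 hp2 hy1 hy.2
      obtain ⟨hsx0, -, -⟩ := sfacts18 p x hp2 hx1
      exact Fcomp18anti p x y hp0 hp2 hx1 hy1
        (by nlinarith [mul_nonneg hsx0 (sub_nonneg.2 hsyr),
          mul_pos (sub_pos.2 (lt_of_lt_of_le hslt hsyr)) (mul_pos two_pos hq0), hq2]) hslt
    · intro x hx y hy hxy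
      have hcm := crit_mem18 p hp4 hp2
      have hx1 : 4*(1-p) ≤ x := le_trans hcm hx
      have hy1 : 4*(1-p) ≤ y := le_trans hcm hy
      have hslt := smono18 p x y hp2 hx1 hxy
      have hsxr := s_ge18 p x hp4 hp2 hx1 hx
      obtain ⟨hsy0, -, -⟩ := sfacts18 p y hp2 hy1
      have hr0 : (0:ℝ) ≤ 2*Real.sqrt p - 1 := by nlinarith
      exact Fcomp18 p x y hp0 hp2 hx1 hy1
        (by nlinarith [mul_nonneg (sub_nonneg.2 hsxr) hsy0,
          mul_pos (sub_pos.2 (lt_of_le_of_lt hsxr hslt)) (mul_pos two_pos hq0), hq2]) hslt
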